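/- Let Q = {x ∈ ℝ^n : 0 ≤ x ≤ u, Ax ≥ b} be a nonempty covering polyhedron with bounds (with each component of u a nonnegative integer or +∞). Then the integer hull conv(Q ∩ ℤ^n) is a covering polyhedron with the same bounds: there exist a nonnegative rational matrix A' and nonnegative rational vector b' such that conv(Q ∩ ℤ^n) = {x ∈ ℝ^n : 0 ≤ x ≤ u, A'x ≥ b'}. -/

import Mathlib

open Finset

/-- Dot product of two vectors in `ℝ^n`. -/
def dotp {n : ℕ} (c x : Fin n → ℝ) : ℝ := ∑ j, c j * x j

/-- A point of `ℝ^n` is integral if all its coordinates are integers. -/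
def isIntPt {n : ℕ} (x : Fin n → ℝ) : Prop := ∀ j, ∃ z : ℤ, x j = (z : ℝ)

/-- The value `sup { cᵀ x : x ∈ S }`, in the extended reals. -/
noncomputable def supVal {n : ℕ} (c : Fin n → ℝ) (S : Set (Fin n → ℝ)) : EReal :=
  ⨆ x ∈ S, ((dotp c x : ℝ) : EReal)

/-- The value `inf { cᵀ x : x ∈ S }`, in the extended reals. -/
noncomputable def infVal {n : ℕ} (c : Fin n → ℝ) (S : Set (Fin n → ℝ)) : EReal :=
  ⨅ x ∈ S, ((dotp c x : ℝ) : EReal)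

/-- The polyhedron `{x ≥ 0 : A x ≤ b}`. -/
def packLP {n m : ℕ} (A : Matrix (Fin m) (Fin n) ℝ) (b : Fin m → ℝ) : Set (Fin n → ℝ) :=
  {x | (∀ j, 0 ≤ x j) ∧ ∀ i, dotp (A i) x ≤ b i}

/-- Aggregation closure of a packing polyhedron. -/
def aggP {n m : ℕ} (A : Matrix (Fin m) (Fin n) ℝ) (b : Fin m → ℝ) : Set (Fin n → ℝ) :=
  ⋂ lam : {l : Fin m → ℝ // ∀ i, 0 ≤ l i},
    convexHull ℝ {x | (∀ j, 0 ≤ x j) ∧ isIntPt x ∧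
      dotp (fun j => ∑ i, lam.1 i * A i j) x ≤ ∑ i, lam.1 i * b i}

/-- 1-row aggregation closure of a packing polyhedron. -/
def oneAggP {n m : ℕ} (A : Matrix (Fin m) (Fin n) ℝ) (b : Fin m → ℝ) : Set (Fin n → ℝ) :=
  ⋂ i : Fin m, convexHull ℝ {x | (∀ j, 0 ≤ x j) ∧ isIntPt x ∧ dotp (A i) x ≤ b i}

/-- Chvátal–Gomory closure of a set `P ⊆ ℝ^n`. -/
def cgClosure {n : ℕ} (P : Set (Fin n → ℝ)) : Set (Fin n → ℝ) :=
  {x | ∀ (c : Fin n → ℤ) (δ : ℝ),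
    (∀ y ∈ P, δ ≤ ∑ j, (c j : ℝ) * y j) → ((⌈δ⌉ : ℤ) : ℝ) ≤ ∑ j, (c j : ℝ) * x j}

/-- 1-row CG closure of a packing polyhedron. -/
def oneCGP {n m : ℕ} (A : Matrix (Fin m) (Fin n) ℝ) (b : Fin m → ℝ) : Set (Fin n → ℝ) :=
  ⋂ i : Fin m, cgClosure {x | (∀ j, 0 ≤ x j) ∧ dotp (A i) x ≤ b i}

/-- Covering polyhedron with bounds `u j` on coordinates `j ∈ J` (coordinates outside `J`
are unbounded above). -/
def coverLP {n m : ℕ} (A : Matrix (Fin m) (Fin n) ℝ) (b : Fin m → ℝ)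
    (J : Finset (Fin n)) (u : Fin n → ℝ) : Set (Fin n → ℝ) :=
  {x | (∀ j, 0 ≤ x j) ∧ (∀ j ∈ J, x j ≤ u j) ∧ ∀ i, b i ≤ dotp (A i) x}

/-- Aggregation closure of a covering polyhedron with bounds. -/
def aggC {n m : ℕ} (A : Matrix (Fin m) (Fin n) ℝ) (b : Fin m → ℝ)
    (J : Finset (Fin n)) (u : Fin n → ℝ) : Set (Fin n → ℝ) :=
  ⋂ lam : {l : Fin m → ℝ // ∀ i, 0 ≤ l i},
    convexHull ℝ {x | (∀ j, 0 ≤ x j) ∧ isIntPt x ∧ (∀ j ∈ J, x j ≤ u j) ∧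
      (∑ i, lam.1 i * b i) ≤ dotp (fun j => ∑ i, lam.1 i * A i j) x}

/-- 1-row aggregation closure of a covering polyhedron with bounds. -/
def oneAggC {n m : ℕ} (A : Matrix (Fin m) (Fin n) ℝ) (b : Fin m → ℝ)
    (J : Finset (Fin n)) (u : Fin n → ℝ) : Set (Fin n → ℝ) :=
  ⋂ i : Fin m, convexHull ℝ
    {x | (∀ j, 0 ≤ x j) ∧ isIntPt x ∧ (∀ j ∈ J, x j ≤ u j) ∧ b i ≤ dotp (A i) x}

/-- 1-row CG closure of a covering polyhedron with bounds. -/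
def oneCGC {n m : ℕ} (A : Matrix (Fin m) (Fin n) ℝ) (b : Fin m → ℝ)
    (J : Finset (Fin n)) (u : Fin n → ℝ) : Set (Fin n → ℝ) :=
  ⋂ i : Fin m, cgClosure {x | (∀ j, 0 ≤ x j) ∧ (∀ j ∈ J, x j ≤ u j) ∧ b i ≤ dotp (A i) x}

namespace Stmt15Aux


abbrev Row (k : ℕ) := (Fin k → ℚ) × ℚ

/-- `x` satisfies row `r` : `r.2 ≤ r.1 ⬝ x`. -/
def rsat {k : ℕ} (r : Row k) (x : Fin k → ℝ) : Prop :=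
  (r.2 : ℝ) ≤ ∑ j, (r.1 j : ℝ) * x j

def sols {k : ℕ} (S : Finset (Row k)) : Set (Fin k → ℝ) := {x | ∀ r ∈ S, rsat r x}

def initRow {k : ℕ} (r : Row (k + 1)) : Row k := (fun j => r.1 j.castSucc, r.2)

def elimRow {k : ℕ} (p q : Row (k + 1)) : Row k :=
  (fun j => (-q.1 (Fin.last k)) * p.1 j.castSucc + p.1 (Fin.last k) * q.1 j.castSucc,
    (-q.1 (Fin.last k)) * p.2 + p.1 (Fin.last k) * q.2)

def FMstep {k : ℕ} (S : Finset (Row (k + 1))) : Finset (Row k) :=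
  (S.filter (fun r => r.1 (Fin.last k) = 0)).image initRow ∪
    ((S ×ˢ S).filter
        (fun pq => 0 < pq.1.1 (Fin.last k) ∧ pq.2.1 (Fin.last k) < 0)).image
      (fun pq => elimRow pq.1 pq.2)

lemma rsat_snoc {k : ℕ} (r : Row (k + 1)) (x : Fin k → ℝ) (t : ℝ) :
    rsat r (Fin.snoc x t) ↔
      (r.2 : ℝ) ≤ (∑ j, (r.1 j.castSucc : ℝ) * x j) + (r.1 (Fin.last k) : ℝ) * t := by
  unfold rsat
  rw [Fin.sum_univ_castSucc]
  simp

lemma FMstep_correct {k : ℕ} (S : Finset (Row (k + 1))) (x : Fin k → ℝ) :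
    x ∈ sols (FMstep S) ↔ ∃ t : ℝ, Fin.snoc x t ∈ sols S := by
  set val : Row (k + 1) → ℝ := fun r => ∑ j, (r.1 j.castSucc : ℝ) * x j with hval
  constructor
  · intro hx
    -- lower / upper bound rows
    set Lo := S.filter (fun r => 0 < r.1 (Fin.last k)) with hLodef
    set Hi := S.filter (fun r => r.1 (Fin.last k) < 0) with hHidef
    set lb : Row (k + 1) → ℝ := fun r => ((r.2 : ℝ) - val r) / (r.1 (Fin.last k) : ℝ) with hlb
    set ub : Row (k + 1) → ℝ := fun r => (val r - (r.2 : ℝ)) / (-(r.1 (Fin.last k) : ℝ)) with hub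
    have key : ∀ p ∈ Lo, ∀ q ∈ Hi, lb p ≤ ub q := by
      intro p hp q hq
      rw [Finset.mem_filter] at hp hq
      have hcomb : rsat (elimRow p q) x := by
        apply hx
        apply Finset.mem_union_right
        apply Finset.mem_image.2
        exact ⟨(p, q), Finset.mem_filter.2 ⟨Finset.mem_product.2 ⟨hp.1, hq.1⟩, hp.2, hq.2⟩, rfl⟩
      have hcp : (0 : ℝ) < (p.1 (Fin.last k) : ℝ) := by exact_mod_cast hp.2
      have hcq : ((q.1 (Fin.last k) : ℝ)) < 0 := by exact_mod_cast hq.2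
      have hexp : (-(q.1 (Fin.last k) : ℝ)) * (p.2 : ℝ) + (p.1 (Fin.last k) : ℝ) * (q.2 : ℝ) ≤
          (-(q.1 (Fin.last k) : ℝ)) * val p + (p.1 (Fin.last k) : ℝ) * val q := by
        have := hcomb
        unfold rsat elimRow at this
        push_cast at this
        calc (-(q.1 (Fin.last k) : ℝ)) * (p.2 : ℝ) + (p.1 (Fin.last k) : ℝ) * (q.2 : ℝ)
            ≤ ∑ j, ((-(q.1 (Fin.last k) : ℝ)) * (p.1 j.castSucc : ℝ)
                + (p.1 (Fin.last k) : ℝ) * (q.1 j.castSucc : ℝ)) * x j := this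
          _ = (-(q.1 (Fin.last k) : ℝ)) * val p + (p.1 (Fin.last k) : ℝ) * val q := by
              rw [hval]
              rw [Finset.mul_sum, Finset.mul_sum, ← Finset.sum_add_distrib]
              congr 1; funext j; ring
      rw [hlb, hub, div_le_div_iff₀ hcp (by linarith)]
      nlinarith [hexp]
    by_cases hLo : Lo.Nonempty
    · refine ⟨Lo.sup' hLo lb, ?_⟩
      intro r hr
      rw [rsat_snoc]
      have hvr : val r = ∑ j, (r.1 j.castSucc : ℝ) * x j := rfl
      rcases lt_trichotomy (r.1 (Fin.last k)) 0 with hc | hc | hc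
      · -- upper bound row
        have hrHi : r ∈ Hi := Finset.mem_filter.2 ⟨hr, hc⟩
        have hcr : ((r.1 (Fin.last k) : ℝ)) < 0 := by exact_mod_cast hc
        have ht0 : Lo.sup' hLo lb ≤ ub r := Finset.sup'_le _ _ fun p hp => key p hp r hrHi
        have ht : Lo.sup' hLo lb ≤ (val r - (r.2 : ℝ)) / (-(r.1 (Fin.last k) : ℝ)) := ht0
        rw [le_div_iff₀ (by linarith)] at ht
        nlinarith [ht, hvr]
      · simp only [hc]
        have : rsat (initRow r) x := by
          apply hx
          exact Finset.mem_union_left _ (Finset.mem_image.2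
            ⟨r, Finset.mem_filter.2 ⟨hr, hc⟩, rfl⟩)
        unfold rsat initRow at this
        simpa using this
      · have hrLo : r ∈ Lo := Finset.mem_filter.2 ⟨hr, hc⟩
        have hcr : (0:ℝ) < ((r.1 (Fin.last k) : ℝ)) := by exact_mod_cast hc
        have ht0 : lb r ≤ Lo.sup' hLo lb := Finset.le_sup' lb hrLo
        have ht : ((r.2 : ℝ) - val r) / (r.1 (Fin.last k) : ℝ) ≤ Lo.sup' hLo lb := ht0
        rw [div_le_iff₀ hcr] at ht
        nlinarith [ht, hvr]
    · by_cases hHi : Hi.Nonempty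
      · refine ⟨Hi.inf' hHi ub, ?_⟩
        intro r hr
        rw [rsat_snoc]
        have hvr : val r = ∑ j, (r.1 j.castSucc : ℝ) * x j := rfl
        rcases lt_trichotomy (r.1 (Fin.last k)) 0 with hc | hc | hc
        · have hrHi : r ∈ Hi := Finset.mem_filter.2 ⟨hr, hc⟩
          have hcr : ((r.1 (Fin.last k) : ℝ)) < 0 := by exact_mod_cast hc
          have ht0 : Hi.inf' hHi ub ≤ ub r := Finset.inf'_le ub hrHi
          have ht : Hi.inf' hHi ub ≤ (val r - (r.2 : ℝ)) / (-(r.1 (Fin.last k) : ℝ)) := ht0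
          rw [le_div_iff₀ (by linarith)] at ht
          nlinarith [ht, hvr]
        · simp only [hc]
          have : rsat (initRow r) x := by
            apply hx
            exact Finset.mem_union_left _ (Finset.mem_image.2
              ⟨r, Finset.mem_filter.2 ⟨hr, hc⟩, rfl⟩)
          unfold rsat initRow at this
          simpa using this
        · exact absurd (Finset.mem_filter.2 ⟨hr, hc⟩ : r ∈ Lo) (fun h => hLo ⟨r, h⟩)
      · refine ⟨0, ?_⟩
        intro r hr
        rw [rsat_snoc]
        have hvr : val r = ∑ j, (r.1 j.castSucc : ℝ) * x j := rfl
        rcases lt_trichotomy (r.1 (Fin.last k)) 0 with hc | hc | hc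
        · exact absurd (Finset.mem_filter.2 ⟨hr, hc⟩ : r ∈ Hi) (fun h => hHi ⟨r, h⟩)
        · simp only [hc]
          have : rsat (initRow r) x := by
            apply hx
            exact Finset.mem_union_left _ (Finset.mem_image.2
              ⟨r, Finset.mem_filter.2 ⟨hr, hc⟩, rfl⟩)
          unfold rsat initRow at this
          simpa using this
        · exact absurd (Finset.mem_filter.2 ⟨hr, hc⟩ : r ∈ Lo) (fun h => hLo ⟨r, h⟩)
  · rintro ⟨t, ht⟩
    intro r hr
    rw [FMstep, Finset.mem_union] at hr
    rcases hr with hr | hr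
    · rcases Finset.mem_image.1 hr with ⟨p, hp, rfl⟩
      rw [Finset.mem_filter] at hp
      have := ht p hp.1
      rw [rsat_snoc] at this
      unfold rsat initRow
      simpa [hp.2] using this
    · rcases Finset.mem_image.1 hr with ⟨⟨p, q⟩, hpq, rfl⟩
      rw [Finset.mem_filter, Finset.mem_product] at hpq
      obtain ⟨⟨hpS, hqS⟩, hcp, hcq⟩ := hpq
      have h1 := ht p hpS
      have h2 := ht q hqS
      rw [rsat_snoc] at h1 h2
      have hcp' : (0:ℝ) < (p.1 (Fin.last k) : ℝ) := by exact_mod_cast hcp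
      have hcq' : ((q.1 (Fin.last k) : ℝ)) < 0 := by exact_mod_cast hcq
      unfold rsat elimRow
      push_cast
      have hsum : ∑ j, ((-(q.1 (Fin.last k) : ℝ)) * (p.1 j.castSucc : ℝ)
            + (p.1 (Fin.last k) : ℝ) * (q.1 j.castSucc : ℝ)) * x j
          = (-(q.1 (Fin.last k) : ℝ)) * (∑ j, (p.1 j.castSucc : ℝ) * x j)
            + (p.1 (Fin.last k) : ℝ) * (∑ j, (q.1 j.castSucc : ℝ) * x j) := by
        rw [Finset.mul_sum, Finset.mul_sum, ← Finset.sum_add_distrib]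
        congr 1; funext j; ring
      rw [hsum]
      nlinarith [h1, h2]

/-- Eliminate the last `K` variables. -/
theorem FM_correct {k K : ℕ} (S : Finset (Row (k + K))) :
    ∃ S' : Finset (Row k), ∀ x : Fin k → ℝ,
      x ∈ sols S' ↔ ∃ y : Fin K → ℝ, Fin.append x y ∈ sols S := by
  induction K with
  | zero =>
    refine ⟨S, fun x => ?_⟩
    constructor
    · intro hx; exact ⟨Fin.elim0, by simpa [Fin.append_elim0] using hx⟩
    · rintro ⟨y, hy⟩
      have : y = Fin.elim0 := Subsingleton.elim _ _
      simpa [this, Fin.append_elim0] using hy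
  | succ K ih =>
    obtain ⟨S', hS'⟩ := ih (FMstep S)
    refine ⟨S', fun x => ?_⟩
    rw [hS']
    constructor
    · rintro ⟨y, hy⟩
      rw [FMstep_correct] at hy
      obtain ⟨t, ht⟩ := hy
      refine ⟨Fin.snoc y t, ?_⟩
      rwa [Fin.append_snoc]
    · rintro ⟨y, hy⟩
      refine ⟨Fin.init y, ?_⟩
      rw [FMstep_correct]
      refine ⟨y (Fin.last K), ?_⟩
      rwa [← Fin.append_snoc, Fin.snoc_init_self]



lemma exists_minimal_le {n : ℕ} (T : Set (Fin n → ℕ)) :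
    ∀ (N : ℕ) (y : Fin n → ℕ), y ∈ T → (∑ j, y j) ≤ N →
      ∃ z, z ∈ T ∧ z ≤ y ∧ ∀ w ∈ T, w ≤ z → w = z := by
  intro N
  induction N with
  | zero =>
    intro y hy hsum
    refine ⟨y, hy, le_rfl, fun w hw hwy => ?_⟩
    funext j
    have h1 : y j = 0 := by
      have h2 : y j ≤ ∑ j, y j := Finset.single_le_sum (fun j _ => Nat.zero_le (y j)) (Finset.mem_univ j)
      omega
    have h3 : w j ≤ y j := hwy j
    omega
  | succ N ih =>
    intro y hy hsum
    by_cases hmin : ∀ w ∈ T, w ≤ y → w = y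
    · exact ⟨y, hy, le_rfl, hmin⟩
    · push_neg at hmin
      obtain ⟨w, hwT, hwy, hne⟩ := hmin
      have hex : ∃ j, w j < y j := by
        by_contra hno
        push_neg at hno
        exact hne (le_antisymm hwy (fun j => hno j))
      obtain ⟨j₀, hj₀⟩ := hex
      have hlt : ∑ j, w j < ∑ j, y j :=
        Finset.sum_lt_sum (fun j _ => hwy j) ⟨j₀, Finset.mem_univ j₀, hj₀⟩
      obtain ⟨z, hzT, hzw, hzmin⟩ := ih w hwT (by omega)
      exact ⟨z, hzT, hzw.trans hwy, hzmin⟩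

lemma minimal_finite {n : ℕ} (T : Set (Fin n → ℕ)) :
    {z | z ∈ T ∧ ∀ w ∈ T, w ≤ z → w = z}.Finite := by
  have hpwo : Set.IsPWO {z : Fin n → ℕ | z ∈ T ∧ ∀ w ∈ T, w ≤ z → w = z} :=
    Set.isPWO_of_wellQuasiOrderedLE _
  have hanti : IsAntichain (· ≤ ·) {z : Fin n → ℕ | z ∈ T ∧ ∀ w ∈ T, w ≤ z → w = z} := by
    intro a ha b hb hne hab
    exact hne (hb.2 a ha.1 hab)
  exact hanti.finite_of_partiallyWellOrderedOn hpwo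



open scoped Classical in
lemma mem_hull_intBox {n : ℕ} (J : Finset (Fin n)) (u : Fin n → ℝ)
    (hu : ∀ j ∈ J, ∃ z : ℕ, u j = (z : ℝ)) (v : Fin n → ℕ) :
    ∀ (d : ℕ) (x : Fin n → ℝ),
      (Finset.univ.filter fun j => ¬∃ z : ℤ, x j = (z : ℝ)).card ≤ d →
      (∀ j, (v j : ℝ) ≤ x j) → (∀ j ∈ J, x j ≤ u j) →
      x ∈ convexHull ℝ {y : Fin n → ℝ |
        isIntPt y ∧ (∀ j, (v j : ℝ) ≤ y j) ∧ ∀ j ∈ J, y j ≤ u j} := by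
  classical
  intro d
  induction d with
  | zero =>
    intro x hcard hvx hxu
    have hint : ∀ j, ∃ z : ℤ, x j = (z : ℝ) := by
      intro j
      by_contra hj
      have : j ∈ Finset.univ.filter fun j => ¬∃ z : ℤ, x j = (z : ℝ) := by
        simp only [Finset.mem_filter, Finset.mem_univ, true_and]; exact hj
      have := Finset.card_pos.2 ⟨j, this⟩
      omega
    exact subset_convexHull ℝ _ ⟨hint, hvx, hxu⟩
  | succ d ih =>
    intro x hcard hvx hxu
    by_cases hint : ∀ j, ∃ z : ℤ, x j = (z : ℝ)
    · exact subset_convexHull ℝ _ ⟨hint, hvx, hxu⟩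
    · push_neg at hint
      obtain ⟨j₀, hj₀⟩ := hint
      set θ : ℝ := Int.fract (x j₀) with hθdef
      have hθ0 : 0 < θ := by
        rw [hθdef, Int.fract_pos]
        intro h
        exact hj₀ ⌊x j₀⌋ h
      have hθ1 : θ < 1 := Int.fract_lt_one _
      set xm : Fin n → ℝ := Function.update x j₀ ((⌊x j₀⌋ : ℤ) : ℝ) with hxm
      set xp : Fin n → ℝ := Function.update x j₀ (((⌊x j₀⌋ + 1 : ℤ) : ℝ)) with hxp
      -- cards
      have hmem₀ : j₀ ∈ Finset.univ.filter fun j => ¬∃ z : ℤ, x j = (z : ℝ) := by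
        simp only [Finset.mem_filter, Finset.mem_univ, true_and]
        intro ⟨z, hz⟩; exact hj₀ z hz
      have hcsub : ∀ y : Fin n → ℝ, (∀ j ≠ j₀, y j = x j) → (∃ z : ℤ, y j₀ = (z : ℝ)) →
          (Finset.univ.filter fun j => ¬∃ z : ℤ, y j = (z : ℝ)).card ≤ d := by
        intro y hagree hyint
        have hsub : (Finset.univ.filter fun j => ¬∃ z : ℤ, y j = (z : ℝ)) ⊆
            (Finset.univ.filter fun j => ¬∃ z : ℤ, x j = (z : ℝ)).erase j₀ := by
          intro j hj
          simp only [Finset.mem_filter, Finset.mem_univ, true_and] at hj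
          have hne : j ≠ j₀ := by rintro rfl; exact hj hyint
          refine Finset.mem_erase.2 ⟨hne, ?_⟩
          simp only [Finset.mem_filter, Finset.mem_univ, true_and]
          rw [← hagree j hne]; exact hj
        have h1 := Finset.card_le_card hsub
        rw [Finset.card_erase_of_mem hmem₀] at h1
        omega
      have hvm : ∀ j, (v j : ℝ) ≤ xm j := by
        intro j
        rcases eq_or_ne j j₀ with rfl | hne
        · rw [hxm, Function.update_self]
          have : (v j : ℤ) ≤ ⌊x j⌋ := Int.le_floor.2 (by exact_mod_cast hvx j)
          exact_mod_cast this
        · rw [hxm, Function.update_of_ne hne]; exact hvx j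
      have hvp : ∀ j, (v j : ℝ) ≤ xp j := by
        intro j
        rcases eq_or_ne j j₀ with rfl | hne
        · rw [hxp, Function.update_self]
          push_cast
          have := Int.lt_floor_add_one (x j)
          linarith [hvx j]
        · rw [hxp, Function.update_of_ne hne]; exact hvx j
      have hum : ∀ j ∈ J, xm j ≤ u j := by
        intro j hj
        rcases eq_or_ne j j₀ with rfl | hne
        · rw [hxm, Function.update_self]
          calc ((⌊x j⌋ : ℤ) : ℝ) ≤ x j := Int.floor_le _
            _ ≤ u j := hxu j hj
        · rw [hxm, Function.update_of_ne hne]; exact hxu j hj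
      have hup : ∀ j ∈ J, xp j ≤ u j := by
        intro j hj
        rcases eq_or_ne j j₀ with rfl | hne
        · rw [hxp, Function.update_self]
          obtain ⟨z, hz⟩ := hu j hj
          have hzr : u j = ((z : ℤ) : ℝ) := by rw [hz]; push_cast; ring
          have hxlt : x j < ((z : ℤ) : ℝ) := by
            rcases lt_or_eq_of_le (hxu j hj) with h | h
            · rw [hzr] at h; exact h
            · exact absurd (h.trans hzr) (hj₀ (z : ℤ))
          have h2 : ⌊x j⌋ + 1 ≤ (z : ℤ) := Int.floor_lt.2 hxlt
          calc ((⌊x j⌋ + 1 : ℤ) : ℝ) ≤ ((z : ℤ) : ℝ) := by exact_mod_cast h2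
            _ = u j := hzr.symm
        · rw [hxp, Function.update_of_ne hne]; exact hxu j hj
      have hmemm := ih xm (hcsub xm (fun j hj => Function.update_of_ne hj _ _) ⟨⌊x j₀⌋, Function.update_self _ _ _⟩) hvm hum
      have hmemp := ih xp (hcsub xp (fun j hj => Function.update_of_ne hj _ _) ⟨⌊x j₀⌋ + 1, Function.update_self _ _ _⟩) hvp hup
      have hcvx := convex_convexHull ℝ {y : Fin n → ℝ |
        isIntPt y ∧ (∀ j, (v j : ℝ) ≤ y j) ∧ ∀ j ∈ J, y j ≤ u j}
      have hmem := hcvx hmemp hmemm (le_of_lt hθ0) (by linarith : (0:ℝ) ≤ 1 - θ) (by ring)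
      have hxeq : x = θ • xp + (1 - θ) • xm := by
        funext j
        rcases eq_or_ne j j₀ with rfl | hne
        · simp only [Pi.add_apply, Pi.smul_apply, smul_eq_mul, hxp, hxm,
            Function.update_self]
          rw [hθdef, Int.fract]
          push_cast
          ring
        · simp only [Pi.add_apply, Pi.smul_apply, smul_eq_mul, hxp, hxm,
            Function.update_of_ne hne]
          ring
      rw [hxeq]; exact hmem


lemma rsat_append {n K : ℕ} (a : Fin n → ℚ) (c : Fin K → ℚ) (β : ℚ)
    (x : Fin n → ℝ) (lam : Fin K → ℝ) :
    rsat (Fin.append a c, β) (Fin.append x lam) ↔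
      (β : ℝ) ≤ (∑ j, (a j : ℝ) * x j) + ∑ k, (c k : ℝ) * lam k := by
  unfold rsat
  rw [Fin.sum_univ_add]
  simp [Fin.append_left, Fin.append_right]

end Stmt15Aux

open Stmt15Aux

/-- The integer hull of a nonempty covering polyhedron with bounds
`Q = {x : 0 ≤ x ≤ u, Ax ≥ b}` (bounds imposed on coordinates in `J`) is again a covering
polyhedron with the same bounds. -/
theorem stmt15 {n m : ℕ} (A : Matrix (Fin m) (Fin n) ℝ) (b : Fin m → ℝ)
    (J : Finset (Fin n)) (u : Fin n → ℝ)
    (hA : ∀ i j, 0 ≤ A i j) (hb : ∀ i, 0 ≤ b i)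
    (hAq : ∀ i j, ∃ q : ℚ, A i j = (q : ℝ)) (hbq : ∀ i, ∃ q : ℚ, b i = (q : ℝ))
    (hu : ∀ j ∈ J, ∃ z : ℕ, u j = (z : ℝ))
    (hne : (coverLP A b J u).Nonempty) :
    ∃ (m' : ℕ) (A' : Matrix (Fin m') (Fin n) ℝ) (b' : Fin m' → ℝ),
      (∀ i j, 0 ≤ A' i j) ∧ (∀ i, 0 ≤ b' i) ∧
      (∀ i j, ∃ q : ℚ, A' i j = (q : ℝ)) ∧ (∀ i, ∃ q : ℚ, b' i = (q : ℝ)) ∧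
      convexHull ℝ {x | x ∈ coverLP A b J u ∧ isIntPt x} = coverLP A' b' J u := by
  classical
  have hcov : ∀ x : Fin n → ℝ, x ∈ coverLP A b J u ↔
      ((∀ j, 0 ≤ x j) ∧ (∀ j ∈ J, x j ≤ u j) ∧ ∀ i, b i ≤ dotp (A i) x) := fun x => Iff.rfl
  have hdotp_mono : ∀ (i) (x y : Fin n → ℝ), (∀ j, x j ≤ y j) →
      dotp (A i) x ≤ dotp (A i) y := by
    intro i x y hxy
    exact Finset.sum_le_sum fun j _ => mul_le_mul_of_nonneg_left (hxy j) (hA i j)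
  -- the integer model
  set T : Set (Fin n → ℕ) := {y | (fun j => (y j : ℝ)) ∈ coverLP A b J u} with hTdef
  -- T is nonempty
  obtain ⟨x₀, hx₀⟩ := hne
  have hx₀' := (hcov x₀).1 hx₀
  have hTne : T.Nonempty := by
    refine ⟨fun j => if hj : j ∈ J then Classical.choose (hu j hj) else (⌈x₀ j⌉).toNat, ?_⟩
    set y₀ : Fin n → ℕ := fun j => if hj : j ∈ J then Classical.choose (hu j hj)
      else (⌈x₀ j⌉).toNat with hy₀
    have hy₀J : ∀ j ∈ J, (y₀ j : ℝ) = u j := by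
      intro j hj
      simp only [hy₀, dif_pos hj]
      exact (Classical.choose_spec (hu j hj)).symm
    have hy₀ge : ∀ j, x₀ j ≤ (y₀ j : ℝ) := by
      intro j
      by_cases hj : j ∈ J
      · rw [hy₀J j hj]; exact hx₀'.2.1 j hj
      · simp only [hy₀, dif_neg hj]
        have h0 : (0:ℤ) ≤ ⌈x₀ j⌉ := Int.ceil_nonneg (hx₀'.1 j)
        have h1 : ((⌈x₀ j⌉.toNat : ℕ) : ℝ) = ((⌈x₀ j⌉ : ℤ) : ℝ) := by
          exact_mod_cast congrArg (fun z : ℤ => (z : ℝ)) (Int.toNat_of_nonneg h0)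
        rw [h1]
        exact Int.le_ceil _
    exact (hcov _).2 ⟨fun j => by positivity, fun j hj => le_of_eq (hy₀J j hj),
      fun i => le_trans (hx₀'.2.2 i) (hdotp_mono i _ _ hy₀ge)⟩
  -- minimal elements
  have hfin := minimal_finite T
  set Mfin : Finset (Fin n → ℕ) := hfin.toFinset with hMfin
  have hMne : Mfin.Nonempty := by
    obtain ⟨y, hy⟩ := hTne
    obtain ⟨z, hzT, _, hzmin⟩ := exists_minimal_le T (∑ j, y j) y hy le_rfl
    exact ⟨z, hfin.mem_toFinset.2 ⟨hzT, hzmin⟩⟩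
  set K := Mfin.card with hKdef
  have hK : 0 < K := Finset.card_pos.2 hMne
  set v : Fin K → (Fin n → ℕ) := fun k => (Mfin.equivFin.symm k : Fin n → ℕ) with hv
  have hvT : ∀ k, v k ∈ T := fun k => (hfin.mem_toFinset.1 (Mfin.equivFin.symm k).2).1
  have hvmin : ∀ y ∈ T, ∃ k, ∀ j, v k j ≤ y j := by
    intro y hy
    obtain ⟨z, hzT, hzle, hzmin⟩ := exists_minimal_le T (∑ j, y j) y hy le_rfl
    refine ⟨Mfin.equivFin ⟨z, hfin.mem_toFinset.2 ⟨hzT, hzmin⟩⟩, fun j => ?_⟩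
    have : v (Mfin.equivFin ⟨z, hfin.mem_toFinset.2 ⟨hzT, hzmin⟩⟩) = z := by
      rw [hv]; simp
    rw [this]; exact hzle j
  have hvu : ∀ k, ∀ j ∈ J, ((v k j : ℝ)) ≤ u j := fun k j hj => ((hvT k).2.1 j hj)
  -- the domination set D
  set D : Set (Fin n → ℝ) := {x | ∃ lam : Fin K → ℝ, (∀ k, 0 ≤ lam k) ∧ (∑ k, lam k) = 1 ∧
    ∀ j, (∑ k, lam k * (v k j : ℝ)) ≤ x j} with hDdef
  have hsingle : ∀ (k₀ : Fin K) (j : Fin n),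
      (∑ k, (if k = k₀ then (1:ℝ) else 0) * (v k j : ℝ)) = (v k₀ j : ℝ) := by
    intro k₀ j
    rw [Finset.sum_eq_single k₀]
    · simp
    · intro c _ hc; simp [hc]
    · intro h; exact absurd (Finset.mem_univ k₀) h
  have hvD : ∀ k₀, (fun j => (v k₀ j : ℝ)) ∈ D := by
    intro k₀
    refine ⟨fun k => if k = k₀ then 1 else 0, fun k => by by_cases hk : k = k₀ <;> simp [hk], by simp, fun j => ?_⟩
    exact le_of_eq (hsingle k₀ j)
  set SR : Set (Fin n → ℝ) := {x | x ∈ coverLP A b J u ∧ isIntPt x} with hSRdef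
  -- Claim A
  have claimA : convexHull ℝ SR =
      {x : Fin n → ℝ | (∀ j, 0 ≤ x j) ∧ ∀ j ∈ J, x j ≤ u j} ∩ D := by
    apply Set.Subset.antisymm
    · apply convexHull_min
      · rintro x ⟨hxQ, hxint⟩
        have hxQ' := (hcov x).1 hxQ
        set y : Fin n → ℕ := fun j => (⌊x j⌋).toNat with hy
        have hxy : ∀ j, (y j : ℝ) = x j := by
          intro j
          obtain ⟨z, hz⟩ := hxint j
          have hz0 : (0:ℤ) ≤ z := by
            have := hxQ'.1 j; rw [hz] at this; exact_mod_cast this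
          have hfl : ⌊x j⌋ = z := by rw [hz]; exact Int.floor_intCast z
          rw [hy]
          simp only [hfl]
          rw [hz]
          exact_mod_cast congrArg (fun w : ℤ => (w : ℝ)) (Int.toNat_of_nonneg hz0)
        have hyT : y ∈ T := by
          show (fun j => (y j : ℝ)) ∈ coverLP A b J u
          have : (fun j => (y j : ℝ)) = x := funext hxy
          rw [this]; exact hxQ
        obtain ⟨k₀, hk₀⟩ := hvmin y hyT
        refine ⟨⟨hxQ'.1, hxQ'.2.1⟩, fun k => if k = k₀ then 1 else 0,
          fun k => by by_cases hk : k = k₀ <;> simp [hk], by simp, fun j => ?_⟩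
        rw [hsingle k₀ j, ← hxy j]
        exact_mod_cast hk₀ j
      · rintro x hx y hy a c ha hc hac
        obtain ⟨⟨hx0, hxu⟩, lam, hlam0, hlam1, hlamle⟩ := hx
        obtain ⟨⟨hy0, hyu⟩, mu, hmu0, hmu1, hmule⟩ := hy
        refine ⟨⟨fun j => ?_, fun j hj => ?_⟩, fun k => a * lam k + c * mu k,
          fun k => by have := hlam0 k; have := hmu0 k; positivity, ?_, fun j => ?_⟩
        · have := hx0 j; have := hy0 j
          simp only [Pi.add_apply, Pi.smul_apply, smul_eq_mul]
          positivity
        · simp only [Pi.add_apply, Pi.smul_apply, smul_eq_mul]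
          have h1 := mul_le_mul_of_nonneg_left (hxu j hj) ha
          have h2 := mul_le_mul_of_nonneg_left (hyu j hj) hc
          have h3 : a * u j + c * u j = u j := by rw [← add_mul, hac, one_mul]
          linarith
        · rw [Finset.sum_add_distrib, ← Finset.mul_sum, ← Finset.mul_sum, hlam1, hmu1]
          linarith
        · have h1 := hlamle j; have h2 := hmule j
          have hexp : (∑ k, (a * lam k + c * mu k) * (v k j : ℝ))
              = a * (∑ k, lam k * (v k j : ℝ)) + c * (∑ k, mu k * (v k j : ℝ)) := by
            rw [Finset.mul_sum, Finset.mul_sum, ← Finset.sum_add_distrib]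
            congr 1; funext k; ring
          rw [hexp]
          simp only [Pi.add_apply, Pi.smul_apply, smul_eq_mul]
          nlinarith
    · rintro x ⟨⟨hx0, hxu⟩, lam, hlam0, hlam1, hlamle⟩
      set w : Fin n → ℝ := fun j => ∑ k, lam k * (v k j : ℝ) with hwdef
      have hwx : ∀ j, w j ≤ x j := hlamle
      have hwu : ∀ j ∈ J, w j ≤ u j := by
        intro j hj
        calc w j ≤ ∑ k, lam k * u j :=
              Finset.sum_le_sum fun k _ => mul_le_mul_of_nonneg_left (hvu k j hj) (hlam0 k)
          _ = u j := by rw [← Finset.sum_mul, hlam1, one_mul]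
      set ρ : Fin K → Fin n → ℝ := fun k j =>
        if j ∈ J ∧ w j < u j then (u j - (v k j : ℝ)) / (u j - w j) else 1 with hρdef
      set xx : Fin K → Fin n → ℝ := fun k j => (v k j : ℝ) + (x j - w j) * ρ k j with hxxdef
      have hρ0 : ∀ k j, 0 ≤ ρ k j := by
        intro k j
        simp only [hρdef]
        split
        · rename_i hcase
          apply div_nonneg
          · have := hvu k j hcase.1; linarith
          · linarith [hcase.2]
        · norm_num
      have hxxv : ∀ k j, (v k j : ℝ) ≤ xx k j := by
        intro k j
        have h1 : 0 ≤ (x j - w j) * ρ k j := mul_nonneg (by linarith [hwx j]) (hρ0 k j)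
        simp only [hxxdef]
        linarith
      have hxxu : ∀ k, ∀ j ∈ J, xx k j ≤ u j := by
        intro k j hj
        simp only [hxxdef, hρdef]
        by_cases hcase : j ∈ J ∧ w j < u j
        · rw [if_pos hcase]
          have h1 : x j - w j ≤ u j - w j := by linarith [hxu j hj]
          have h2 : 0 ≤ (u j - (v k j : ℝ)) := by linarith [hvu k j hj]
          have h3 : 0 < u j - w j := by linarith [hcase.2]
          rw [div_eq_mul_inv]
          have h4 : (x j - w j) * ((u j - (v k j:ℝ)) * (u j - w j)⁻¹)
              ≤ (u j - w j) * ((u j - (v k j:ℝ)) * (u j - w j)⁻¹) := by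
            apply mul_le_mul_of_nonneg_right h1
            positivity
          have h5 : (u j - w j) * ((u j - (v k j:ℝ)) * (u j - w j)⁻¹) = u j - (v k j:ℝ) := by
            field_simp
          linarith
        · rw [if_neg hcase]
          have hwj : u j ≤ w j := by
            rcases not_and_or.1 hcase with h | h
            · exact absurd hj h
            · linarith [not_lt.1 h]
          have hxw : x j = w j := le_antisymm (by linarith [hxu j hj]) (hwx j)
          rw [hxw]
          have := hvu k j hj
          linarith
      have hxxhull : ∀ k, xx k ∈ convexHull ℝ SR := by
        intro k
        have h1 := mem_hull_intBox J u hu (v k)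
          ((Finset.univ.filter fun j => ¬∃ z : ℤ, xx k j = (z : ℝ)).card) (xx k)
          le_rfl (hxxv k) (hxxu k)
        refine convexHull_mono ?_ h1
        rintro yy ⟨hyint, hyge, hyle⟩
        refine ⟨(hcov yy).2 ⟨fun j => le_trans (by positivity) (hyge j), hyle, fun i => ?_⟩, hyint⟩
        calc b i ≤ dotp (A i) (fun j => (v k j : ℝ)) := (hvT k).2.2 i
          _ ≤ dotp (A i) yy := hdotp_mono i _ _ hyge
      have hsum : ∀ j, ∑ k, lam k * xx k j = x j := by
        intro j
        have hexp : (∑ k, lam k * xx k j)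
            = w j + (x j - w j) * ∑ k, lam k * ρ k j := by
          simp only [hxxdef]
          rw [Finset.mul_sum]
          rw [hwdef]
          rw [← Finset.sum_add_distrib]
          congr 1; funext k; ring
        rw [hexp]
        by_cases hxw : x j = w j
        · rw [← hxw]; ring
        · have hρ1 : ∑ k, lam k * ρ k j = 1 := by
            by_cases hcase : j ∈ J ∧ w j < u j
            · have : ∀ k, lam k * ρ k j = lam k * (u j - (v k j:ℝ)) / (u j - w j) := by
                intro k; simp only [hρdef]; rw [if_pos hcase]; ring
              rw [Finset.sum_congr rfl fun k _ => this k]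
              rw [← Finset.sum_div]
              have h3 : 0 < u j - w j := by linarith [hcase.2]
              rw [div_eq_one_iff_eq (by linarith)]
              have : (∑ k, lam k * (u j - (v k j:ℝ)))
                  = (∑ k, lam k) * u j - ∑ k, lam k * (v k j:ℝ) := by
                rw [Finset.sum_mul, ← Finset.sum_sub_distrib]
                congr 1; funext k; ring
              rw [this, hlam1, one_mul, hwdef]
            · by_cases hj : j ∈ J
              · exfalso
                have hwj : u j ≤ w j := by
                  rcases not_and_or.1 hcase with h | h
                  · exact absurd hj h
                  · linarith [not_lt.1 h]
                have := hxu j hj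
                have := hwx j
                exact hxw (by linarith)
              · have : ∀ k, ρ k j = 1 := by
                  intro k; simp only [hρdef]; rw [if_neg (fun hc => hj hc.1)]
                simp only [this, mul_one]
                exact hlam1
          rw [hρ1]; ring
      have hfinal : (∑ k, lam k • xx k) ∈ convexHull ℝ SR :=
        (convex_convexHull ℝ SR).sum_mem (fun k _ => hlam0 k) hlam1 (fun k _ => hxxhull k)
      have hxeq : x = ∑ k, lam k • xx k := by
        funext j
        rw [Finset.sum_apply]
        simp only [Pi.smul_apply, smul_eq_mul]
        exact (hsum j).symm
      rw [hxeq]; exact hfinal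
  -- the big linear system in variables (x, lam)
  set row : (Fin n ⊕ (Fin K ⊕ Bool)) → Row (n + K) := fun i =>
    Sum.elim
      (fun j => ((Fin.append (fun j' => if j' = j then (1:ℚ) else 0)
        (fun k => -((v k j : ℚ)))), (0:ℚ)))
      (Sum.elim
        (fun k => ((Fin.append (0 : Fin n → ℚ) (fun k' => if k' = k then (1:ℚ) else 0)), (0:ℚ)))
        (fun t => cond t ((Fin.append (0 : Fin n → ℚ) (fun _ => (1:ℚ))), (1:ℚ))
          ((Fin.append (0 : Fin n → ℚ) (fun _ => (-1:ℚ))), (-1:ℚ)))) i with hrow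
  set bigS : Finset (Row (n + K)) := Finset.univ.image row with hbigS
  have hsolsbig : ∀ z, z ∈ sols bigS ↔ ∀ i, rsat (row i) z := by
    intro z
    constructor
    · intro h i; exact h _ (Finset.mem_image_of_mem row (Finset.mem_univ i))
    · intro h r hr; obtain ⟨i, _, rfl⟩ := Finset.mem_image.1 hr; exact h i
  have hbig : ∀ (x : Fin n → ℝ) (lam : Fin K → ℝ), Fin.append x lam ∈ sols bigS ↔
      ((∀ k, 0 ≤ lam k) ∧ (∑ k, lam k) = 1 ∧ ∀ j, (∑ k, lam k * (v k j : ℝ)) ≤ x j) := by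
    intro x lam
    rw [hsolsbig]
    have e1 : ∀ j : Fin n, (∑ j', ((if j' = j then (1:ℚ) else 0 : ℚ) : ℝ) * x j') = x j := by
      intro j
      rw [Finset.sum_eq_single j]
      · simp
      · intro c _ hc; simp [hc]
      · intro h; exact absurd (Finset.mem_univ j) h
    have e2 : ∀ (k : Fin K) (lam : Fin K → ℝ),
        (∑ k', ((if k' = k then (1:ℚ) else 0 : ℚ) : ℝ) * lam k') = lam k := by
      intro k lam
      rw [Finset.sum_eq_single k]
      · simp
      · intro c _ hc; simp [hc]
      · intro h; exact absurd (Finset.mem_univ k) h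
    constructor
    · intro h
      refine ⟨fun k => ?_, ?_, fun j => ?_⟩
      · have := h (Sum.inr (Sum.inl k))
        rw [hrow] at this
        simp only [Sum.elim_inl, Sum.elim_inr] at this
        rw [rsat_append] at this
        rw [e2 k lam] at this
        simpa using this
      · have h1 := h (Sum.inr (Sum.inr true))
        have h2 := h (Sum.inr (Sum.inr false))
        rw [hrow] at h1 h2
        simp only [Sum.elim_inl, Sum.elim_inr, Bool.cond_true, Bool.cond_false] at h1 h2
        rw [rsat_append] at h1 h2
        simp only [Pi.zero_apply, Rat.cast_zero, zero_mul, Finset.sum_const_zero, zero_add,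
          Rat.cast_one, one_mul, Rat.cast_neg, neg_mul, Finset.sum_neg_distrib] at h1 h2
        have h1' : (1:ℝ) ≤ ∑ k, lam k := by simpa using h1
        have h2' : ∑ k, lam k ≤ 1 := by linarith [h2]
        linarith
      · have := h (Sum.inl j)
        rw [hrow] at this
        simp only [Sum.elim_inl] at this
        rw [rsat_append] at this
        rw [e1 j] at this
        have heq : ∑ k, ((-(v k j : ℚ) : ℚ) : ℝ) * lam k = -∑ k, lam k * (v k j : ℝ) := by
          rw [← Finset.sum_neg_distrib]
          congr 1; funext k; push_cast; ring
        rw [heq] at this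
        push_cast at this
        linarith
    · rintro ⟨h0, h1, h2⟩ i
      match i with
      | Sum.inl j =>
        rw [hrow]
        simp only [Sum.elim_inl]
        rw [rsat_append, e1 j]
        have heq : ∑ k, ((-(v k j : ℚ) : ℚ) : ℝ) * lam k = -∑ k, lam k * (v k j : ℝ) := by
          rw [← Finset.sum_neg_distrib]
          congr 1; funext k; push_cast; ring
        rw [heq]
        push_cast
        linarith [h2 j]
      | Sum.inr (Sum.inl k) =>
        rw [hrow]
        simp only [Sum.elim_inl, Sum.elim_inr]
        rw [rsat_append, e2 k lam]
        simp only [Pi.zero_apply, Rat.cast_zero, zero_mul, Finset.sum_const_zero, zero_add]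
        exact h0 k
      | Sum.inr (Sum.inr true) =>
        rw [hrow]
        simp only [Sum.elim_inl, Sum.elim_inr, Bool.cond_true]
        rw [rsat_append]
        simp only [Pi.zero_apply, Rat.cast_zero, zero_mul, Finset.sum_const_zero, zero_add,
          Rat.cast_one, one_mul]
        rw [h1]
      | Sum.inr (Sum.inr false) =>
        rw [hrow]
        simp only [Sum.elim_inl, Sum.elim_inr, Bool.cond_false]
        rw [rsat_append]
        simp only [Pi.zero_apply, Rat.cast_zero, zero_mul, Finset.sum_const_zero, zero_add,
          Rat.cast_neg, Rat.cast_one, neg_mul, one_mul]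
        have heq : ∑ k, -lam k = -∑ k, lam k := by
          rw [← Finset.sum_neg_distrib]
        rw [heq, h1]
  -- Fourier-Motzkin projection
  obtain ⟨S', hS'⟩ := FM_correct (k := n) (K := K) bigS
  have hDsols : D = sols S' := by
    ext x
    constructor
    · rintro ⟨lam, h⟩
      exact (hS' x).2 ⟨lam, (hbig x lam).2 h⟩
    · intro h
      obtain ⟨lam, hlam⟩ := (hS' x).1 h
      exact ⟨lam, (hbig x lam).1 hlam⟩
  -- enumerate S'
  set m' := S'.card with hm'
  set rowOf : Fin m' → Row n := fun i => (S'.equivFin.symm i : Row n) with hrowOf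
  have hsolsS' : ∀ x, x ∈ sols S' ↔
      ∀ i : Fin m', (((rowOf i).2 : ℝ)) ≤ ∑ j, ((rowOf i).1 j : ℝ) * x j := by
    intro x
    constructor
    · intro h i; exact h _ (S'.equivFin.symm i).2
    · intro h r hr
      have := h (S'.equivFin ⟨r, hr⟩)
      rw [hrowOf] at this
      simp only [Equiv.symm_apply_apply] at this
      exact this
  set A' : Matrix (Fin m') (Fin n) ℝ := fun i j => ((rowOf i).1 j : ℝ) with hA'
  set d' : Fin m' → ℝ := fun i => ((rowOf i).2 : ℝ) with hd'
  set b' : Fin m' → ℝ := fun i => max (d' i) 0 with hb'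
  -- nonnegativity of A'
  have hA'0 : ∀ i j, 0 ≤ A' i j := by
    intro i j
    by_contra hneg
    push_neg at hneg
    set x₁ : Fin n → ℝ := fun j' => (v ⟨0, hK⟩ j' : ℝ) with hx₁
    have hx₁D : x₁ ∈ D := hvD _
    have hup : ∀ t : ℝ, 0 ≤ t → (fun j' => x₁ j' + if j' = j then t else 0) ∈ D := by
      intro t ht
      obtain ⟨lam, h0, h1, h2⟩ := hx₁D
      refine ⟨lam, h0, h1, fun j' => ?_⟩
      refine le_trans (h2 j') ?_
      show x₁ j' ≤ x₁ j' + if j' = j then t else 0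
      split
      · linarith
      · simp
    have hrowi : ∀ t : ℝ, 0 ≤ t → d' i ≤ (∑ j', A' i j' * x₁ j') + t * A' i j := by
      intro t ht
      have hmem : (fun j' => x₁ j' + if j' = j then t else 0) ∈ sols S' := by
        rw [← hDsols]; exact hup t ht
      have := (hsolsS' _).1 hmem i
      have hexp : (∑ j', ((rowOf i).1 j' : ℝ) * (x₁ j' + if j' = j then t else 0))
          = (∑ j', A' i j' * x₁ j') + t * A' i j := by
        rw [show (∑ j', ((rowOf i).1 j' : ℝ) * (x₁ j' + if j' = j then t else 0))
            = ∑ j', (A' i j' * x₁ j' + (if j' = j then A' i j' * t else 0)) from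
          Finset.sum_congr rfl (fun j' _ => by rw [hA']; split <;> ring)]
        rw [Finset.sum_add_distrib, Finset.sum_ite_eq' Finset.univ j (fun j' => A' i j' * t)]
        simp [mul_comm]
      rw [hexp] at this
      exact this
    have hC := hrowi 0 le_rfl
    simp only [zero_mul, add_zero] at hC
    set C := ∑ j', A' i j' * x₁ j' with hCdef
    have hbig2 := hrowi ((C - d' i + 1) / (-A' i j)) (by
      apply div_nonneg
      · linarith
      · linarith)
    have hcalc : ((C - d' i + 1) / (-A' i j)) * A' i j = -(C - d' i + 1) := by
      have hane : -A' i j ≠ 0 := ne_of_gt (by linarith)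
      have hane' : A' i j ≠ 0 := ne_of_lt hneg
      field_simp
    rw [hcalc] at hbig2
    linarith
  -- final assembly
  refine ⟨m', A', b', hA'0, fun i => le_max_right _ _, fun i j => ⟨(rowOf i).1 j, rfl⟩,
    fun i => ⟨max (rowOf i).2 0, by rw [hb', hd']; push_cast; rfl⟩, ?_⟩
  rw [claimA]
  ext x
  constructor
  · rintro ⟨⟨hx0, hxu⟩, hxD⟩
    refine ⟨hx0, hxu, fun i => ?_⟩
    have hmem : x ∈ sols S' := by rw [← hDsols]; exact hxD
    have hsat := (hsolsS' x).1 hmem i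
    have hpos : 0 ≤ dotp (A' i) x := Finset.sum_nonneg fun j _ => mul_nonneg (hA'0 i j) (hx0 j)
    exact max_le hsat hpos
  · rintro ⟨hx0, hxu, hxineq⟩
    refine ⟨⟨hx0, hxu⟩, ?_⟩
    rw [hDsols]
    apply (hsolsS' x).2
    intro i
    exact le_trans (le_max_left _ _) (hxineq i)
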